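/- arXiv:2102.12966 — 2 statements merged into one kernel-verified Lean document; each statement's English description precedes it below -/
import Mathlib

section
/- The point (0, 12) on the elliptic curve y^2 = x^3 - 52x + 144 over the rationals has infinite order in the group of rational points. -/
open WeierstrassCurve WeierstrassCurve.Affine WeierstrassCurve.Affine.Point

/-- The Weierstrass curve `y² = x³ - 52x + 144` over `ℚ`. -/
def E0 : WeierstrassCurve ℚ := ⟨0, 0, 0, -52, 144⟩

lemma Ea₁ : E0.toAffine.a₁ = 0 := rfl
lemma Ea₂ : E0.toAffine.a₂ = 0 := rfl
lemma Ea₃ : E0.toAffine.a₃ = 0 := rfl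
lemma Ea₄ : E0.toAffine.a₄ = -52 := rfl
lemma Ea₆ : E0.toAffine.a₆ = 144 := rfl

lemma eqn {x y : ℚ} (h : E0.toAffine.Equation x y) : y^2 = x^3 - 52*x + 144 := by
  rw [WeierstrassCurve.Affine.equation_iff] at h
  simp only [Ea₁, Ea₂, Ea₃, Ea₄, Ea₆] at h
  linarith

lemma negY_eq (x y : ℚ) : E0.toAffine.negY x y = -y := by
  simp [WeierstrassCurve.Affine.negY, Ea₁, Ea₃]

lemma abstract_key (k : ℕ) (x a c B A : ℚ) (hc0 : c ≠ 0) (hB0 : B ≠ 0)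
    (hne : x^3 - 52*x + 144 ≠ 0)
    (hx : x = a / (2 ^ (2*k+2) * c))
    (hBQ : B = a^3 - 52*a*(2^(2*k+2)*c)^2 + 144*(2^(2*k+2)*c)^3)
    (hAQ : A = a^4 + 104*a^2*(2^(2*k+2)*c)^2 - 1152*a*(2^(2*k+2)*c)^3 + 2704*(2^(2*k+2)*c)^4) :
    (3*x^2-52)^2/(4*(x^3-52*x+144)) - x - x = A / (2 ^ (2*(k+1)+2) * (c * B)) := by
  have hd0 : ((2:ℚ)) ^ (2*k+2) * c ≠ 0 := mul_ne_zero (pow_ne_zero _ two_ne_zero) hc0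
  have h4 : (4:ℚ)*(x^3-52*x+144) ≠ 0 := mul_ne_zero four_ne_zero hne
  have hR : (2:ℚ)^(2*(k+1)+2) * (c*B) ≠ 0 :=
    mul_ne_zero (pow_ne_zero _ two_ne_zero) (mul_ne_zero hc0 hB0)
  have comb : (3*x^2-52)^2/(4*(x^3-52*x+144)) - x - x
      = ((3*x^2-52)^2 - 8*x*(x^3-52*x+144)) / (4*(x^3-52*x+144)) := by
    rw [eq_div_iff h4, sub_mul, sub_mul, div_mul_cancel₀ _ h4]; ring
  rw [comb, div_eq_div_iff h4 hR, hx, hBQ, hAQ]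
  field_simp
  ring

/-- `Good k Q` : `Q` is an affine point whose x-coordinate is `a / (2^(2k+2) c)`
with `a`, `c` odd, i.e. has 2-adic valuation `-(2k+2)`. -/
def Good (k : ℕ) (Q : E0.toAffine.Point) : Prop :=
  ∃ (x y : ℚ) (h : E0.toAffine.Nonsingular x y) (a c : ℤ),
    Q = some _ _ h ∧ Odd a ∧ Odd c ∧ x = (a : ℚ) / (2 ^ (2*k+2) * c)

lemma step {k : ℕ} {Q : E0.toAffine.Point} (hQ : Good k Q) : Good (k+1) (Q + Q) := by
  obtain ⟨x, y, h, a, c, rfl, ha, hc, hx⟩ := hQ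
  have heq : y^2 = x^3 - 52*x + 144 := eqn h.1
  set D : ℤ := 2 ^ (2*k+2) * c with hD
  obtain ⟨e, he⟩ : (2:ℤ) ∣ D := ⟨2 ^ (2*k+1) * c, by rw [hD]; ring⟩
  have hc0 : (c : ℚ) ≠ 0 := Int.cast_ne_zero.2 (by rintro rfl; simp [Int.odd_iff] at hc)
  set B : ℤ := a^3 - 52*a*D^2 + 144*D^3 with hB
  set A : ℤ := a^4 + 104*a^2*D^2 - 1152*a*D^3 + 2704*D^4 with hA
  have hBodd : Odd B := by
    have hd : B = a^3 + 2*(-104*a*e^2 + 576*e^3) := by rw [hB, he]; ring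
    rw [hd]; exact (ha.pow).add_even (even_two_mul _)
  have hAodd : Odd A := by
    have hd : A = a^4 + 2*(208*a^2*e^2 - 4608*a*e^3 + 21632*e^4) := by rw [hA, he]; ring
    rw [hd]; exact (ha.pow).add_even (even_two_mul _)
  have hBQ : (B:ℚ) = (a:ℚ)^3 - 52*(a:ℚ)*(2^(2*k+2)*(c:ℚ))^2 + 144*(2^(2*k+2)*(c:ℚ))^3 := by
    push_cast [hB, hD]; ring
  have hAQ : (A:ℚ) = (a:ℚ)^4 + 104*(a:ℚ)^2*(2^(2*k+2)*(c:ℚ))^2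
      - 1152*(a:ℚ)*(2^(2*k+2)*(c:ℚ))^3 + 2704*(2^(2*k+2)*(c:ℚ))^4 := by
    push_cast [hA, hD]; ring
  have hB0 : (B : ℚ) ≠ 0 := by
    exact_mod_cast fun h0 => (Int.not_odd_iff_even.2 (by exact_mod_cast h0 ▸ Even.zero)) hBodd
  have hBcast : (B:ℚ) = (x^3 - 52*x + 144) * (2 ^ (2*k+2) * (c:ℚ))^3 := by
    rw [hBQ, hx]; field_simp
  have hne : x^3 - 52*x + 144 ≠ 0 := fun h0 => hB0 (by rw [hBcast, h0, zero_mul])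
  have hy0 : y ≠ 0 := by
    rintro rfl
    exact hne (by rw [← heq]; norm_num)
  have hy_ne : y ≠ E0.toAffine.negY x y := by
    rw [negY_eq]; intro h0; exact hy0 (by linarith)
  have hslope : E0.toAffine.slope x x y y = (3*x^2 - 52) / (2*y) := by
    rw [slope_of_Y_ne rfl hy_ne, negY_eq, Ea₁, Ea₂, Ea₄]
    ring_nf
  have key : E0.toAffine.addX x x (E0.toAffine.slope x x y y)
      = (A:ℚ) / (2 ^ (2*(k+1)+2) * ((c:ℚ) * (B:ℚ))) := by
    rw [WeierstrassCurve.Affine.addX, hslope, Ea₁, Ea₂]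
    have h2y : ((3*x^2-52)/(2*y))^2 = (3*x^2-52)^2 / (4*(x^3-52*x+144)) := by
      rw [div_pow, mul_pow, heq]; norm_num
    calc ((3*x^2-52)/(2*y))^2 + 0 * ((3*x^2-52)/(2*y)) - 0 - x - x
        = (3*x^2-52)^2/(4*(x^3-52*x+144)) - x - x := by rw [h2y]; ring
      _ = (A:ℚ) / (2 ^ (2*(k+1)+2) * ((c:ℚ) * (B:ℚ))) :=
          abstract_key k x a c _ _ hc0 hB0 hne hx hBQ hAQ
  exact ⟨_, _, nonsingular_add h h fun hxy => hy_ne hxy.right, A, c * B,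
    add_self_of_Y_ne hy_ne, hAodd, hc.mul hBodd, by rw [Int.cast_mul]; exact key⟩

lemma base (h : E0.toAffine.Nonsingular 0 12) : Good 0 (some _ _ h + some _ _ h) := by
  have hy_ne : (12:ℚ) ≠ E0.toAffine.negY 0 12 := by rw [negY_eq]; norm_num
  refine ⟨_, _, nonsingular_add h h fun hxy => hy_ne hxy.right, 169, 9,
    add_self_of_Y_ne hy_ne, by decide, by decide, ?_⟩
  rw [WeierstrassCurve.Affine.addX, slope_of_Y_ne rfl hy_ne, negY_eq, Ea₁, Ea₂, Ea₄]
  norm_num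

lemma good_inj {k l : ℕ} {Q : E0.toAffine.Point} (hk : Good k Q) (hl : Good l Q) : k = l := by
  obtain ⟨x, y, h, a, c, rfl, ha, hc, hx⟩ := hk
  obtain ⟨x', y', h', a', c', hQ, ha', hc', hx'⟩ := hl
  obtain ⟨rfl, rfl⟩ : x = x' ∧ y = y' := by
    injection hQ with h1 h2
    exact ⟨h1, h2⟩
  clear hQ
  by_contra hne
  have key : ∀ (k l : ℕ) (a c a' c' : ℤ), k < l → Odd a → Odd c → Odd a' → Odd c' →
      (a : ℚ) / (2 ^ (2*k+2) * c) = (a' : ℚ) / (2 ^ (2*l+2) * c') → False := by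
    intro k l a c a' c' hkl ha hc ha' hc' hxx
    have hc0 : (c : ℚ) ≠ 0 := Int.cast_ne_zero.2 (by rintro rfl; simp [Int.odd_iff] at hc)
    have hc'0 : (c' : ℚ) ≠ 0 := Int.cast_ne_zero.2 (by rintro rfl; simp [Int.odd_iff] at hc')
    rw [div_eq_div_iff (mul_ne_zero (pow_ne_zero _ two_ne_zero) hc0)
      (mul_ne_zero (pow_ne_zero _ two_ne_zero) hc'0)] at hxx
    have hZ : a * (2 ^ (2*l+2) * c') = a' * (2 ^ (2*k+2) * c) := by exact_mod_cast hxx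
    obtain ⟨m, hm⟩ : ∃ m, 2*l+2 = (2*k+2) + (m+1) := ⟨2*l - 2*k - 1, by omega⟩
    rw [hm, pow_add] at hZ
    have hcancel : a * (2 ^ (m+1) * c') = a' * c := by
      have h2 : (2:ℤ) ^ (2*k+2) ≠ 0 := pow_ne_zero _ two_ne_zero
      apply mul_left_cancel₀ h2
      linear_combination hZ
    have hodd : Odd (a * (2 ^ (m+1) * c')) := hcancel ▸ ha'.mul hc
    rw [Int.odd_mul, Int.odd_mul] at hodd
    exact (Int.not_odd_iff_even.mpr ⟨2^m, by ring⟩) hodd.2.1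
  rcases lt_or_gt_of_ne hne with hlt | hlt
  · exact key k l a c a' c' hlt ha hc ha' hc' (hx ▸ hx')
  · exact key l k a' c' a c hlt ha' hc' ha hc (hx' ▸ hx)

lemma goodn (h : E0.toAffine.Nonsingular 0 12) (k : ℕ) :
    Good k ((2 ^ k) • (some _ _ h + some _ _ h)) := by
  induction k with
  | zero => simpa using base h
  | succ k ih =>
    have h2 : (2 ^ (k+1)) • (some _ _ h + some _ _ h) =
        (2 ^ k) • (some _ _ h + some _ _ h) + (2 ^ k) • (some _ _ h + some _ _ h) := by
      rw [pow_succ, mul_nsmul, two_nsmul]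
    rw [h2]
    exact step ih

/-- The point `(0, 12)` on the elliptic curve `y² = x³ - 52x + 144` over `ℚ` has
infinite order in the group of rational points. -/
theorem stmt_0 (h : E0.toAffine.Nonsingular 0 12) :
    ¬ IsOfFinAddOrder (WeierstrassCurve.Affine.Point.some _ _ h) := by
  intro hfin
  set R : E0.toAffine.Point := some _ _ h + some _ _ h with hR
  have hfin2 : IsOfFinAddOrder R := hfin.add hfin
  have hn : 0 < addOrderOf R := hfin2.addOrderOf_pos
  obtain ⟨k, l, hne, hmod⟩ : ∃ k l : ℕ, k ≠ l ∧
      (⟨2^k % addOrderOf R, Nat.mod_lt _ hn⟩ : Fin (addOrderOf R)) =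
      ⟨2^l % addOrderOf R, Nat.mod_lt _ hn⟩ := by
    obtain ⟨k, l, hne, hmod⟩ := Finite.exists_ne_map_eq_of_infinite
      fun k : ℕ => (⟨2^k % addOrderOf R, Nat.mod_lt _ hn⟩ : Fin (addOrderOf R))
    exact ⟨k, l, hne, hmod⟩
  have hsmul : ∀ {k l : ℕ}, k ≤ l → 2^k % addOrderOf R = 2^l % addOrderOf R →
      (2^k) • R = (2^l) • R := by
    intro k l hkl hm
    obtain ⟨t, ht⟩ := (Nat.modEq_iff_dvd' (Nat.pow_le_pow_right two_pos hkl)).mp hm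
    have h2 : 2^l = 2^k + addOrderOf R * t := by
      have := Nat.pow_le_pow_right two_pos hkl
      omega
    rw [h2, add_nsmul, mul_nsmul, addOrderOf_nsmul_eq_zero, smul_zero, add_zero]
  have hmod' : 2^k % addOrderOf R = 2^l % addOrderOf R := Fin.mk.inj_iff.mp hmod
  have heq : (2^k) • R = (2^l) • R := by
    rcases le_total k l with hkl | hkl
    · exact hsmul hkl hmod'
    · exact (hsmul hkl hmod'.symm).symm
  exact hne (good_inj (goodn h k) (heq ▸ goodn h l))
end

section
/- The affine curve over ℚ in 𝔸² defined by (the projectivization of) S₁²S₂T₂ + S₁T₁(2S₂² + 2S₂T₂ + 3T₂²) + T₁²T₂(S₂ + T₂) = 0 in ℙ¹ × ℙ¹ is a smooth curve of bidegree (2,2); in particular the hypersurface X₁ ⊂ ℙ¹ × ℙ¹ defined by this bihomogeneous polynomial is smooth. -/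
/-- The hypersurface `X₁ ⊂ ℙ¹ × ℙ¹` defined by the bihomogeneous polynomial of
bidegree `(2,2)`
`F = S₁²S₂T₂ + S₁T₁(2S₂² + 2S₂T₂ + 3T₂²) + T₁²T₂(S₂ + T₂)`
is smooth: over an algebraic closure there is no common zero of `F` and its four
partial derivatives with `(S₁,T₁) ≠ (0,0)` and `(S₂,T₂) ≠ (0,0)`. -/
theorem stmt_14 (K : Type*) [Field K] [IsAlgClosed K] [CharZero K]
    (s₁ t₁ s₂ t₂ : K)
    (h1 : (s₁, t₁) ≠ (0, 0)) (h2 : (s₂, t₂) ≠ (0, 0))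
    (hF : s₁ ^ 2 * s₂ * t₂ + s₁ * t₁ * (2 * s₂ ^ 2 + 2 * s₂ * t₂ + 3 * t₂ ^ 2)
        + t₁ ^ 2 * t₂ * (s₂ + t₂) = 0)
    (hS₁ : 2 * s₁ * s₂ * t₂ + t₁ * (2 * s₂ ^ 2 + 2 * s₂ * t₂ + 3 * t₂ ^ 2) = 0)
    (hT₁ : s₁ * (2 * s₂ ^ 2 + 2 * s₂ * t₂ + 3 * t₂ ^ 2) + 2 * t₁ * t₂ * (s₂ + t₂) = 0)
    (hS₂ : s₁ ^ 2 * t₂ + s₁ * t₁ * (4 * s₂ + 2 * t₂) + t₁ ^ 2 * t₂ = 0)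
    (hT₂ : s₁ ^ 2 * s₂ + s₁ * t₁ * (2 * s₂ + 6 * t₂) + t₁ ^ 2 * (s₂ + 2 * t₂) = 0) :
    False := by
  by_cases ht₁ : t₁ = 0
  · -- then s₁ ≠ 0, and hS₂, hT₂ force s₂ = t₂ = 0
    have hs₁ : s₁ ≠ 0 := by
      rintro rfl; exact h1 (by rw [ht₁])
    have hsq : s₁ ^ 2 ≠ 0 := pow_ne_zero 2 hs₁
    have ht₂ : t₂ = 0 := by
      have h : s₁ ^ 2 * t₂ = 0 := by linear_combination hS₂ - (s₁ * (4 * s₂ + 2 * t₂) + t₁ * t₂) * ht₁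
      exact (mul_eq_zero.mp h).resolve_left hsq
    have hs₂ : s₂ = 0 := by
      have h : s₁ ^ 2 * s₂ = 0 := by linear_combination hT₂ - (s₁ * (2 * s₂ + 6 * t₂) + t₁ * (s₂ + 2 * t₂)) * ht₁
      exact (mul_eq_zero.mp h).resolve_left hsq
    exact h2 (by rw [hs₂, ht₂])
  by_cases ht₂ : t₂ = 0
  · -- then hS₁ forces s₂ = 0
    have h : t₁ * (2 * s₂ ^ 2) = 0 := by
      linear_combination hS₁ - (2 * s₁ * s₂ + t₁ * (2 * s₂ + 3 * t₂)) * ht₂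
    have hs₂ : s₂ ^ 2 = 0 := by
      have := (mul_eq_zero.mp h).resolve_left ht₁
      have h2' : (2 : K) * s₂ ^ 2 = 0 := by linear_combination this
      exact (mul_eq_zero.mp h2').resolve_left two_ne_zero
    exact h2 (by rw [pow_eq_zero_iff (two_ne_zero) |>.mp hs₂, ht₂])
  -- main case: t₁ ≠ 0, t₂ ≠ 0
  -- A₁ : s₁² s₂ = t₁² (s₂ + t₂)
  have hA₁ : s₁ ^ 2 * s₂ - t₁ ^ 2 * (s₂ + t₂) = 0 := by
    have h : 2 * t₂ * (s₁ ^ 2 * s₂ - t₁ ^ 2 * (s₂ + t₂)) = 0 := by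
      linear_combination s₁ * hS₁ - t₁ * hT₁
    have h' := (mul_eq_zero.mp h).resolve_right
    rcases mul_eq_zero.mp h with h'' | h''
    · rcases mul_eq_zero.mp h'' with h3 | h3
      · exact absurd h3 two_ne_zero
      · exact absurd h3 ht₂
    · exact h''
  -- hstar : s₁ (2s₂+6t₂) + t₁ (2s₂+3t₂) = 0
  have hstar : s₁ * (2 * s₂ + 6 * t₂) + t₁ * (2 * s₂ + 3 * t₂) = 0 := by
    have h : t₁ * (s₁ * (2 * s₂ + 6 * t₂) + t₁ * (2 * s₂ + 3 * t₂)) = 0 := by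
      linear_combination hT₂ - hA₁
    exact (mul_eq_zero.mp h).resolve_left ht₁
  -- E1 : 4s₂³ + 12s₂²t₂ + 12s₂t₂² + 18t₂³ = 0
  have hE1 : 4 * s₂ ^ 3 + 12 * s₂ ^ 2 * t₂ + 12 * s₂ * t₂ ^ 2 + 18 * t₂ ^ 3 = 0 := by
    have h : t₁ * (4 * s₂ ^ 3 + 12 * s₂ ^ 2 * t₂ + 12 * s₂ * t₂ ^ 2 + 18 * t₂ ^ 3) = 0 := by
      linear_combination (2 * s₂ + 6 * t₂) * hS₁ - 2 * s₂ * t₂ * hstar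
    exact (mul_eq_zero.mp h).resolve_left ht₁
  -- E2 : -16s₂³ - 72s₂²t₂ - 72s₂t₂² + 9t₂³ = 0
  have hE2 : -16 * s₂ ^ 3 - 72 * s₂ ^ 2 * t₂ - 72 * s₂ * t₂ ^ 2 + 9 * t₂ ^ 3 = 0 := by
    have h : t₁ ^ 2 * (-16 * s₂ ^ 3 - 72 * s₂ ^ 2 * t₂ - 72 * s₂ * t₂ ^ 2 + 9 * t₂ ^ 3) = 0 := by
      linear_combination (2 * s₂ + 6 * t₂) ^ 2 * hS₂ -
        (t₂ * s₁ * (2 * s₂ + 6 * t₂) - t₂ * t₁ * (2 * s₂ + 3 * t₂) +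
          t₁ * (4 * s₂ + 2 * t₂) * (2 * s₂ + 6 * t₂)) * hstar
    exact (mul_eq_zero.mp h).resolve_left (pow_ne_zero 2 ht₁)
  -- E3 : 8s₂² + 8s₂t₂ - 27t₂² = 0
  have hE3 : 8 * s₂ ^ 2 + 8 * s₂ * t₂ - 27 * t₂ ^ 2 = 0 := by
    have h : (-3 * t₂) * (8 * s₂ ^ 2 + 8 * s₂ * t₂ - 27 * t₂ ^ 2) = 0 := by
      linear_combination hE2 + 4 * hE1
    have h3 : (-3 : K) * t₂ ≠ 0 := by
      intro hc
      rcases mul_eq_zero.mp hc with hc | hc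
      · norm_num at hc
      · exact ht₂ hc
    exact (mul_eq_zero.mp h).resolve_left h3
  -- E4 : 35s₂ + 90t₂ = 0
  have hE4 : 35 * s₂ + 90 * t₂ = 0 := by
    have h : t₂ ^ 2 * (35 * s₂ + 90 * t₂) = 0 := by
      linear_combination 2 * hE1 - (s₂ + 2 * t₂) * hE3
    exact (mul_eq_zero.mp h).resolve_left (pow_ne_zero 2 ht₂)
  -- contradiction
  have hfin : (1305 : K) * t₂ ^ 2 = 0 := by
    linear_combination 245 * hE3 - (56 * s₂ - 88 * t₂) * hE4
  rcases mul_eq_zero.mp hfin with h | h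
  · norm_num at h
  · exact ht₂ (pow_eq_zero_iff two_ne_zero |>.mp h)
end
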